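/- The operator norm of the weighted discrete least-squares projection satisfies ‖Q̂‖ ≤ ‖I_p‖ · (1 + (Σ_{k=1}^q w_k)^{1/2} / min_{j=0,…,p} √(w̃_j) · sup_{‖ψ‖_∞ = 1} E_p(ψ)); equivalently, for every continuous φ with ‖φ‖_∞ = 1, ‖Q̂φ‖_∞ ≤ ‖I_p‖ (1 + (Σ_k w_k)^{1/2} / min_j √(w̃_j) · sup_{‖ψ‖_∞=1} E_p(ψ)). -/

import Mathlib

/-- The uniform norm on `[−1, 1]`. -/
noncomputable def unifNorm (φ : ℝ → ℝ) : ℝ :=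
  sSup ((fun t => |φ t|) '' Set.Icc (-1 : ℝ) 1)

/-- `E_p(φ) = inf_{Q ∈ 𝒫^p} ‖φ − Q‖_∞`, the best uniform approximation error by
polynomials of degree `≤ p`. -/
noncomputable def Ep (p : ℕ) (φ : ℝ → ℝ) : ℝ :=
  sInf {e : ℝ | ∃ Q : Polynomial ℝ, Q.degree ≤ (p : ℕ) ∧
    e = unifNorm fun t => φ t - Q.eval t}

/-- The operator norm, induced by the uniform norm on `[−1, 1]`, of an operator
sending continuous functions to polynomials. -/
noncomputable def opNorm (T : (ℝ → ℝ) → Polynomial ℝ) : ℝ :=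
  sSup {a : ℝ | ∃ φ : ℝ → ℝ, ContinuousOn φ (Set.Icc (-1 : ℝ) 1) ∧
    unifNorm φ = 1 ∧ a = unifNorm fun t => (T φ).eval t}

/-- `sup_{‖ψ‖_∞ = 1} E_p(ψ)` over continuous `ψ`. -/
noncomputable def supEp (p : ℕ) : ℝ :=
  sSup {a : ℝ | ∃ ψ : ℝ → ℝ, ContinuousOn ψ (Set.Icc (-1 : ℝ) 1) ∧
    unifNorm ψ = 1 ∧ a = Ep p ψ}

lemma unifNorm_nonneg (f : ℝ → ℝ) : 0 ≤ unifNorm f :=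
  Real.sSup_nonneg (by rintro x ⟨t, -, rfl⟩; positivity)

lemma abs_le_unifNorm {f : ℝ → ℝ} (hf : ContinuousOn f (Set.Icc (-1 : ℝ) 1)) {t : ℝ}
    (ht : t ∈ Set.Icc (-1 : ℝ) 1) : |f t| ≤ unifNorm f :=
  le_csSup (isCompact_Icc.bddAbove_image hf.abs) ⟨t, ht, rfl⟩

lemma unifNorm_le {f : ℝ → ℝ} {M : ℝ} (hM : 0 ≤ M)
    (h : ∀ t ∈ Set.Icc (-1 : ℝ) 1, |f t| ≤ M) : unifNorm f ≤ M :=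
  Real.sSup_le (by rintro x ⟨t, ht, rfl⟩; exact h t ht) hM

lemma unifNorm_one : unifNorm (fun _ => (1 : ℝ)) = 1 := by
  refine le_antisymm (unifNorm_le zero_le_one (by simp)) ?_
  have := abs_le_unifNorm (f := fun _ => (1 : ℝ)) continuousOn_const
    (show (0 : ℝ) ∈ Set.Icc (-1 : ℝ) 1 by norm_num)
  simpa using this

lemma unifNorm_const_mul {c : ℝ} (hc : 0 ≤ c) {g : ℝ → ℝ}
    (hg : ContinuousOn g (Set.Icc (-1 : ℝ) 1)) :
    unifNorm (fun t => c * g t) = c * unifNorm g := by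
  refine le_antisymm ?_ ?_
  · refine unifNorm_le (mul_nonneg hc (unifNorm_nonneg g)) fun t ht => ?_
    rw [abs_mul, abs_of_nonneg hc]
    exact mul_le_mul_of_nonneg_left (abs_le_unifNorm hg ht) hc
  · rcases hc.lt_or_eq with hc' | rfl
    · have hcont : ContinuousOn (fun t => c * g t) (Set.Icc (-1 : ℝ) 1) :=
        continuousOn_const.mul hg
      have hgle : unifNorm g ≤ c⁻¹ * unifNorm (fun t => c * g t) := by
        refine unifNorm_le (mul_nonneg (inv_nonneg.2 hc'.le) (unifNorm_nonneg _)) fun t ht => ?_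
        have := abs_le_unifNorm hcont ht
        rw [abs_mul, abs_of_nonneg hc'.le] at this
        calc |g t| = c⁻¹ * (c * |g t|) := by field_simp
          _ ≤ c⁻¹ * unifNorm (fun t => c * g t) :=
            mul_le_mul_of_nonneg_left this (inv_nonneg.2 hc'.le)
      calc c * unifNorm g ≤ c * (c⁻¹ * unifNorm (fun t => c * g t)) :=
            mul_le_mul_of_nonneg_left hgle hc'.le
        _ = unifNorm (fun t => c * g t) := by field_simp
    · simpa using unifNorm_nonneg (fun t => 0 * g t)

/-- the weighted discrete least-squares projection `Q̂` satisfies,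
for every continuous `φ` with `‖φ‖_∞ = 1`,
`‖Q̂φ‖_∞ ≤ ‖I_p‖ (1 + (Σ_k w_k)^{1/2} / min_j √(w̃_j) · sup_{‖ψ‖_∞=1} E_p(ψ))`. -/
theorem weighted_least_squares_opNorm_bound
    (p q : ℕ) (hpq : p + 1 ≤ q)
    (z : Fin q → ℝ) (hzinj : Function.Injective z)
    (hzmem : ∀ k, z k ∈ Set.Icc (-1 : ℝ) 1)
    (w : Fin q → ℝ) (hw : ∀ k, 0 < w k)
    -- `Q̂` is the weighted least-squares projection onto `𝒫^p`
    (Qhat : (ℝ → ℝ) → Polynomial ℝ)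
    (hQhat : ∀ φ : ℝ → ℝ, ContinuousOn φ (Set.Icc (-1 : ℝ) 1) →
      (Qhat φ).degree ≤ (p : ℕ) ∧ ∀ Q : Polynomial ℝ, Q.degree ≤ (p : ℕ) →
        ∑ k : Fin q, w k * (φ (z k) - (Qhat φ).eval (z k)) ^ 2 ≤
          ∑ k : Fin q, w k * (φ (z k) - Q.eval (z k)) ^ 2)
    -- `I` is the Lagrange interpolation operator at the subset `z ∘ ι` of the
    -- nodes, with attached weights `w ∘ ι`
    (ι : Fin (p + 1) → Fin q) (hι : Function.Injective ι)
    (I : (ℝ → ℝ) → Polynomial ℝ)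
    (hI : ∀ φ : ℝ → ℝ, ContinuousOn φ (Set.Icc (-1 : ℝ) 1) →
      (I φ).degree ≤ (p : ℕ) ∧ ∀ j : Fin (p + 1), (I φ).eval (z (ι j)) = φ (z (ι j)))
    (φ : ℝ → ℝ) (hφ : ContinuousOn φ (Set.Icc (-1 : ℝ) 1))
    (hφ1 : unifNorm φ = 1) :
    unifNorm (fun t => (Qhat φ).eval t) ≤
      opNorm I *
        (1 + Real.sqrt (∑ k : Fin q, w k) / (⨅ j : Fin (p + 1), Real.sqrt (w (ι j))) *
          supEp p) := by
  classical
  -- notation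
  set v : Fin (p + 1) → ℝ := fun j => z (ι j) with hvdef
  have hvinj : Function.Injective v := fun a b h => hι (hzinj h)
  have hlt : ∀ {f : Polynomial ℝ}, f.degree ≤ (p : ℕ) →
      f.degree < ((p + 1 : ℕ) : WithBot ℕ) := fun h =>
    lt_of_le_of_lt h (by exact_mod_cast p.lt_succ_self)
  -- uniqueness of degree ≤ p polynomials agreeing at the p+1 nodes
  have huniq : ∀ f g : Polynomial ℝ, f.degree < ((p + 1 : ℕ) : WithBot ℕ) →
      g.degree < ((p + 1 : ℕ) : WithBot ℕ) →
      (∀ j, f.eval (v j) = g.eval (v j)) → f = g := by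
    intro f g hf hg hfg
    have hcard : (Finset.image v Finset.univ).card = p + 1 := by
      rw [Finset.card_image_of_injective _ hvinj, Finset.card_univ, Fintype.card_fin]
    refine Polynomial.eq_of_degrees_lt_of_eval_finset_eq (Finset.image v Finset.univ)
      ?_ ?_ ?_
    · rw [hcard]; exact_mod_cast hf
    · rw [hcard]; exact_mod_cast hg
    · rintro x hx
      obtain ⟨j, -, rfl⟩ := Finset.mem_image.1 hx
      exact hfg j
  -- the set defining opNorm I, and its boundedness (Lebesgue constant)
  set Sop : Set ℝ := {a : ℝ | ∃ ψ : ℝ → ℝ, ContinuousOn ψ (Set.Icc (-1 : ℝ) 1) ∧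
      unifNorm ψ = 1 ∧ a = unifNorm fun t => (I ψ).eval t} with hSopdef
  have hopeq : opNorm I = sSup Sop := rfl
  have hbdd : BddAbove Sop := by
    refine ⟨∑ j : Fin (p + 1), unifNorm (fun t => (Lagrange.basis Finset.univ v j).eval t), ?_⟩
    rintro a ⟨ψ, hψ, hψ1, rfl⟩
    have hinterp : I ψ = Lagrange.interpolate Finset.univ v (fun j => ψ (v j)) := by
      refine huniq _ _ (hlt (hI ψ hψ).1) ?_ fun j => ?_
      · have := Lagrange.degree_interpolate_lt (s := (Finset.univ : Finset (Fin (p+1)))) (fun j => ψ (v j)) hvinj.injOn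
        rwa [Finset.card_univ, Fintype.card_fin] at this
      · rw [(hI ψ hψ).2 j, Lagrange.eval_interpolate_at_node _ hvinj.injOn (Finset.mem_univ j)]
    rw [hinterp]
    refine unifNorm_le (Finset.sum_nonneg fun j _ => unifNorm_nonneg _) fun t ht => ?_
    rw [Lagrange.interpolate_apply, Polynomial.eval_finset_sum]
    refine (Finset.abs_sum_le_sum_abs _ _).trans (Finset.sum_le_sum fun j _ => ?_)
    rw [Polynomial.eval_mul, Polynomial.eval_C, abs_mul]
    calc |ψ (v j)| * |(Lagrange.basis Finset.univ v j).eval t|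
        ≤ 1 * unifNorm (fun t => (Lagrange.basis Finset.univ v j).eval t) :=
          mul_le_mul (hψ1 ▸ abs_le_unifNorm hψ (hzmem (ι j)))
            (abs_le_unifNorm (Polynomial.continuous _).continuousOn ht)
            (abs_nonneg _) zero_le_one
      _ = _ := one_mul _
  have hop0 : 0 ≤ opNorm I := by
    rw [hopeq]
    exact (unifNorm_nonneg (fun t => (I (fun _ => 1)).eval t)).trans
      (le_csSup hbdd ⟨fun _ => 1, continuousOn_const, unifNorm_one, rfl⟩)
  -- operator norm bound on applications
  have hopapply : ∀ ψ : ℝ → ℝ, ContinuousOn ψ (Set.Icc (-1 : ℝ) 1) →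
      unifNorm (fun t => (I ψ).eval t) ≤ opNorm I * unifNorm ψ := by
    intro ψ hψ
    rcases (unifNorm_nonneg ψ).lt_or_eq with hpos | h0
    · set c := unifNorm ψ with hcdef
      set ψ' : ℝ → ℝ := fun t => c⁻¹ * ψ t with hψ'def
      have hψ'c : ContinuousOn ψ' (Set.Icc (-1 : ℝ) 1) := continuousOn_const.mul hψ
      have hn : unifNorm ψ' = 1 := by
        rw [hψ'def, unifNorm_const_mul (inv_nonneg.2 hpos.le) hψ, inv_mul_cancel₀ hpos.ne']
      have hle : unifNorm (fun t => (I ψ').eval t) ≤ opNorm I := by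
        rw [hopeq]; exact le_csSup hbdd ⟨ψ', hψ'c, hn, rfl⟩
      have hIψ : I ψ = c • I ψ' := by
        refine huniq _ _ (hlt (hI ψ hψ).1)
          (lt_of_le_of_lt (Polynomial.degree_smul_le _ _) (hlt (hI ψ' hψ'c).1)) fun j => ?_
        rw [(hI ψ hψ).2 j, Polynomial.eval_smul, (hI ψ' hψ'c).2 j, smul_eq_mul, hψ'def]
        field_simp
      calc unifNorm (fun t => (I ψ).eval t)
          = unifNorm (fun t => c * (I ψ').eval t) := by
            congr 1; funext t; rw [hIψ, Polynomial.eval_smul, smul_eq_mul]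
        _ = c * unifNorm (fun t => (I ψ').eval t) :=
            unifNorm_const_mul hpos.le (Polynomial.continuous _).continuousOn
        _ ≤ c * opNorm I := mul_le_mul_of_nonneg_left hle hpos.le
        _ = opNorm I * unifNorm ψ := mul_comm _ _
    · have hz : ∀ t ∈ Set.Icc (-1 : ℝ) 1, ψ t = 0 := fun t ht =>
        abs_eq_zero.1 (le_antisymm (h0 ▸ abs_le_unifNorm hψ ht) (abs_nonneg _))
      have hI0 : I ψ = 0 := by
        refine huniq _ _ (hlt (hI ψ hψ).1)
          (by rw [Polynomial.degree_zero]; exact WithBot.bot_lt_coe _) fun j => ?_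
        rw [(hI ψ hψ).2 j, hz _ (hzmem (ι j)), Polynomial.eval_zero]
      rw [hI0, ← h0, mul_zero]
      simpa using unifNorm_le le_rfl (fun t _ => by simp)
  -- setup of main estimate
  obtain ⟨hPdeg, hPmin⟩ := hQhat φ hφ
  set P : Polynomial ℝ := Qhat φ with hPdef
  set S : ℝ := ∑ k : Fin q, w k with hSdef
  have hS : 0 ≤ S := Finset.sum_nonneg fun k _ => (hw k).le
  set m : ℝ := ⨅ j : Fin (p + 1), Real.sqrt (w (ι j)) with hmdef
  have hmle : ∀ j, m ≤ Real.sqrt (w (ι j)) := fun j =>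
    ciInf_le (Finite.bddBelow_range _) j
  have hm : 0 < m := by
    obtain ⟨j0, -, hj0⟩ := Finset.exists_min_image Finset.univ
      (fun j => Real.sqrt (w (ι j))) ⟨0, Finset.mem_univ 0⟩
    have : m = Real.sqrt (w (ι j0)) :=
      le_antisymm (hmle j0) (le_ciInf fun j => hj0 j (Finset.mem_univ j))
    rw [this]
    exact Real.sqrt_pos.2 (hw _)
  set C : ℝ := Real.sqrt S / m with hCdef
  have hC : 0 ≤ C := div_nonneg (Real.sqrt_nonneg _) hm.le
  -- bound for supEp
  have hbddE : BddAbove {a : ℝ | ∃ ψ : ℝ → ℝ, ContinuousOn ψ (Set.Icc (-1 : ℝ) 1) ∧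
      unifNorm ψ = 1 ∧ a = Ep p ψ} := by
    refine ⟨1, ?_⟩
    rintro a ⟨ψ, hψ, hψ1, rfl⟩
    refine csInf_le ⟨0, by rintro e ⟨Q, -, rfl⟩; exact unifNorm_nonneg _⟩
      ⟨0, by simp, ?_⟩
    simp only [Polynomial.eval_zero, sub_zero]
    exact hψ1.symm
  have hEple : Ep p φ ≤ supEp p := le_csSup hbddE ⟨φ, hφ, hφ1, rfl⟩
  -- main estimate with slack ε
  have key : ∀ ε : ℝ, 0 < ε →
      unifNorm (fun t => P.eval t) ≤ opNorm I * (1 + C * supEp p) + ε := by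
    intro ε hε
    set δ : ℝ := ε / (opNorm I * C + 1) with hδdef
    have hX : (0 : ℝ) < opNorm I * C + 1 := by positivity
    have hδ : 0 < δ := div_pos hε hX
    -- near-best polynomial approximation
    have hne : ({e : ℝ | ∃ Q : Polynomial ℝ, Q.degree ≤ (p : ℕ) ∧
        e = unifNorm fun t => φ t - Q.eval t}).Nonempty :=
      ⟨unifNorm fun t => φ t - (0 : Polynomial ℝ).eval t, 0, by simp, rfl⟩
    obtain ⟨e, ⟨Qs, hQsdeg, rfl⟩, hbe⟩ := exists_lt_of_csInf_lt hne
      (show sInf _ < Ep p φ + δ from lt_add_of_pos_right _ hδ)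
    set b : ℝ := unifNorm fun t => φ t - Qs.eval t with hbdef
    have hbnn : 0 ≤ b := unifNorm_nonneg _
    have hQscont : ContinuousOn (fun t => φ t - Qs.eval t) (Set.Icc (-1 : ℝ) 1) :=
      hφ.sub (Polynomial.continuous Qs).continuousOn
    have hsum : ∑ k : Fin q, w k * (φ (z k) - P.eval (z k)) ^ 2 ≤ S * b ^ 2 := by
      refine (hPmin Qs hQsdeg).trans ?_
      calc ∑ k : Fin q, w k * (φ (z k) - Qs.eval (z k)) ^ 2
          ≤ ∑ k : Fin q, w k * b ^ 2 := by
            refine Finset.sum_le_sum fun k _ => mul_le_mul_of_nonneg_left ?_ (hw k).le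
            have habs : |φ (z k) - Qs.eval (z k)| ≤ b := abs_le_unifNorm hQscont (hzmem k)
            calc (φ (z k) - Qs.eval (z k)) ^ 2 = |φ (z k) - Qs.eval (z k)| ^ 2 :=
                  (sq_abs _).symm
              _ ≤ b ^ 2 := pow_le_pow_left₀ (abs_nonneg _) habs 2
        _ = S * b ^ 2 := by rw [hSdef, ← Finset.sum_mul]
    -- node estimate
    have hnode : ∀ j : Fin (p + 1), |P.eval (v j)| ≤ 1 + C * b := by
      intro j
      have h1 : w (ι j) * (φ (v j) - P.eval (v j)) ^ 2 ≤ S * b ^ 2 :=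
        le_trans (Finset.single_le_sum
          (f := fun k => w k * (φ (z k) - P.eval (z k)) ^ 2)
          (fun k _ => mul_nonneg (hw k).le (sq_nonneg _)) (Finset.mem_univ (ι j))) hsum
      have h2 : (φ (v j) - P.eval (v j)) ^ 2 ≤
          (Real.sqrt S * b / Real.sqrt (w (ι j))) ^ 2 := by
        rw [div_pow, mul_pow, Real.sq_sqrt hS, Real.sq_sqrt (hw (ι j)).le,
          le_div_iff₀ (hw (ι j)), mul_comm]
        exact h1
      have h3 : |φ (v j) - P.eval (v j)| ≤ Real.sqrt S * b / Real.sqrt (w (ι j)) := by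
        have hr : 0 ≤ Real.sqrt S * b / Real.sqrt (w (ι j)) := by positivity
        calc |φ (v j) - P.eval (v j)| = Real.sqrt ((φ (v j) - P.eval (v j)) ^ 2) :=
              (Real.sqrt_sq_eq_abs _).symm
          _ ≤ Real.sqrt ((Real.sqrt S * b / Real.sqrt (w (ι j))) ^ 2) :=
              Real.sqrt_le_sqrt h2
          _ = |Real.sqrt S * b / Real.sqrt (w (ι j))| := Real.sqrt_sq_eq_abs _
          _ = Real.sqrt S * b / Real.sqrt (w (ι j)) := abs_of_nonneg hr
      have h4 : Real.sqrt S * b / Real.sqrt (w (ι j)) ≤ C * b := by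
        rw [hCdef, div_mul_eq_mul_div]
        exact div_le_div_of_nonneg_left (by positivity) hm (hmle j)
      have h5 : |φ (v j)| ≤ 1 := hφ1 ▸ abs_le_unifNorm hφ (hzmem (ι j))
      have hrw : P.eval (v j) = φ (v j) - (φ (v j) - P.eval (v j)) := by ring
      calc |P.eval (v j)| = |φ (v j) - (φ (v j) - P.eval (v j))| := by rw [← hrw]
        _ ≤ |φ (v j)| + |φ (v j) - P.eval (v j)| := by
            rw [sub_eq_add_neg]
            exact (abs_add_le _ _).trans (by rw [abs_neg])
        _ ≤ 1 + C * b := add_le_add h5 (h3.trans h4)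
    -- clamped function
    set M : ℝ := 1 + C * b with hMdef
    have hM0 : 0 ≤ M := add_nonneg zero_le_one (mul_nonneg hC hbnn)
    set ψc : ℝ → ℝ := fun t => max (-M) (min M (P.eval t)) with hψcdef
    have hψccont : Continuous ψc :=
      continuous_const.max (continuous_const.min (Polynomial.continuous P))
    have hψceq : ∀ j, ψc (v j) = P.eval (v j) := by
      intro j
      have h := abs_le.1 (hnode j)
      rw [hψcdef]
      simp only
      rw [min_eq_right h.2, max_eq_right h.1]
    have hψcabs : ∀ t, |ψc t| ≤ M := fun t =>
      abs_le.2 ⟨le_max_left _ _, max_le (neg_le_self hM0) (min_le_left _ _)⟩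
    have hψcnorm : unifNorm ψc ≤ M := unifNorm_le hM0 fun t _ => hψcabs t
    have hIc : I ψc = P := by
      refine huniq _ _ (hlt (hI ψc hψccont.continuousOn).1) (hlt hPdeg) fun j => ?_
      rw [(hI ψc hψccont.continuousOn).2 j]
      exact hψceq j
    have hPle : unifNorm (fun t => P.eval t) ≤ opNorm I * M := by
      calc unifNorm (fun t => P.eval t) = unifNorm (fun t => (I ψc).eval t) := by rw [hIc]
        _ ≤ opNorm I * unifNorm ψc := hopapply ψc hψccont.continuousOn
        _ ≤ opNorm I * M := mul_le_mul_of_nonneg_left hψcnorm hop0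
    -- now combine
    have hb2 : b ≤ supEp p + δ := le_trans hbe.le (add_le_add_left hEple δ)
    have hδε : opNorm I * C * δ ≤ ε := by
      calc opNorm I * C * δ ≤ (opNorm I * C + 1) * δ :=
            mul_le_mul_of_nonneg_right (by linarith [mul_nonneg hop0 hC]) hδ.le
        _ = ε := by rw [hδdef, mul_comm, div_mul_cancel₀ _ hX.ne']
    calc unifNorm (fun t => P.eval t) ≤ opNorm I * (1 + C * b) := hPle
      _ ≤ opNorm I * (1 + C * (supEp p + δ)) := by
          refine mul_le_mul_of_nonneg_left ?_ hop0
          exact add_le_add_right (mul_le_mul_of_nonneg_left hb2 hC) 1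
      _ = opNorm I * (1 + C * supEp p) + opNorm I * C * δ := by ring
      _ ≤ opNorm I * (1 + C * supEp p) + ε := add_le_add_right hδε _
  -- conclude
  by_contra hcon
  push_neg at hcon
  have h2 := key ((unifNorm (fun t => P.eval t) -
    opNorm I * (1 + C * supEp p)) / 2) (by linarith)
  linarith
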